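/- arXiv:1907.05005 — 2 statements merged into one kernel-verified Lean document; each statement's English description precedes it below -/
import Mathlib

section
/- One-step contraction on non-expanding graphs: let θ ≥ 2 be an integer, p ∈ (0,1), and set δ = (1−p)/3. Let G be a simple graph on n vertices and let m ≤ n be a positive integer such that every W ⊆ V with |W| = m satisfies |W^{*2}| ≤ (1+δ)m. Then for every initial set X₀ with |X₀| ≤ m, the threshold-θ contact process satisfies P( |X₁| ≥ (1−δ)m ) ≤ exp( −δ² m / 3 ). -/
open MeasureTheory ProbabilityTheory

/-- For `W ⊆ V`, `starSet G l W = W^{*l}` is the set of vertices having at least `l`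
neighbors in `W`. -/
noncomputable def starSet {V : Type*} [Fintype V] (G : SimpleGraph V) (l : ℕ)
    (W : Finset V) : Finset V :=
  letI := Classical.dec
  Finset.univ.filter fun v => l ≤ (W.filter fun u => G.Adj v u).card

/-- The discrete-time threshold-`θ` contact process with infection probability `p` and initial
infected set `X0`, driven by the field `ω` of `[0,1]`-valued random variables:
`X_{t+1} = {v ∈ (X_t)^{*θ} : ω(t+1, v) ≤ p}`. -/
noncomputable def tcp {V : Type*} [Fintype V] (G : SimpleGraph V) (θ : ℕ) (p : ℝ)
    (X0 : Finset V) (ω : ℕ × V → ℝ) : ℕ → Finset V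
  | 0 => X0
  | t + 1 =>
      letI := Classical.dec
      (starSet G θ (tcp G θ p X0 ω t)).filter fun v => ω (t + 1, v) ≤ p

/-- `P` is the law of an i.i.d. field of Uniform`[0,1]` random variables indexed by `ℕ × V`,
i.e. the infinite product of uniform measures on `[0,1]`: the coordinate maps are independent
and each is uniformly distributed on `[0,1]`. -/
def IsIIDUniform {V : Type*} (P : Measure ((ℕ × V) → ℝ)) : Prop :=
  IsProbabilityMeasure P ∧
    iIndepFun (fun i ω => ω i) P ∧
    ∀ i : ℕ × V, P.map (fun ω => ω i) = volume.restrict (Set.Icc (0 : ℝ) 1)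

lemma aux_indep_reindex {Ω ι κ β : Type*} [MeasurableSpace Ω] [mβ : MeasurableSpace β]
    {μ : Measure Ω} {f : ι → Ω → β}
    (h : iIndepFun f μ) {j : κ → ι} (hj : Function.Injective j) :
    iIndepFun (fun k => f (j k)) μ := by
  rw [iIndepFun_iff_measure_inter_preimage_eq_mul] at h ⊢
  intro S sets hsets
  classical
  have key := h (S.image j) (sets := Function.extend j sets fun _ => Set.univ) ?_
  · rw [Finset.set_biInter_finset_image, Finset.prod_image (fun k _ l _ hkl => hj hkl)] at key
    simpa only [hj.extend_apply] using key
  · intro i hi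
    rcases Finset.mem_image.1 hi with ⟨k, hk, rfl⟩
    rw [hj.extend_apply]
    exact hsets k hk

lemma aux_key {δ : ℝ} (h0 : 0 < δ) (h1 : δ < 1/3) :
    (1 + δ) * (1 - 3*δ) * (Real.exp δ - 1) - δ * (1 - δ) ≤ -δ^2/3 := by
  have hexp : Real.exp δ ≤ 1 + δ + δ^2/2 + (2/9)*δ^3 := by
    have h := Real.exp_bound (x := δ) (by rw [abs_of_pos h0]; linarith) (n := 3) (by norm_num)
    have h2 := (abs_sub_le_iff.1 h).1
    simp [Finset.sum_range_succ, abs_of_pos h0] at h2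
    norm_num [Nat.factorial] at h2
    nlinarith [h2]
  have hge : (1:ℝ) ≤ Real.exp δ := by
    nlinarith [Real.add_one_le_exp δ]
  nlinarith [sq_nonneg δ, pow_pos h0 3, mul_pos h0 h0]


/-- One-step contraction on non-expanding graphs: with `δ = (1-p)/3`, if every set of `m`
vertices `W` satisfies `|W^{*2}| ≤ (1+δ)m`, then started from at most `m` infected vertices,
the probability that the threshold-`θ` contact process has at least `(1-δ)m` infected vertices
after one step is at most `exp(-δ²m/3)`. -/
theorem tcp_one_step_contraction {V : Type*} [Fintype V] (G : SimpleGraph V)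
    (θ : ℕ) (hθ : 2 ≤ θ) (p : ℝ) (hp : p ∈ Set.Ioo (0 : ℝ) 1)
    (n m : ℕ) (hn : Fintype.card V = n) (hm : 0 < m) (hmn : m ≤ n)
    (hW : ∀ W : Finset V, W.card = m →
      ((starSet G 2 W).card : ℝ) ≤ (1 + (1 - p) / 3) * m)
    (X0 : Finset V) (hX0 : X0.card ≤ m)
    (P : Measure ((ℕ × V) → ℝ)) (hP : IsIIDUniform P) :
    P {ω | (1 - (1 - p) / 3) * m ≤ ((tcp G θ p X0 ω 1).card : ℝ)} ≤
      ENNReal.ofReal (Real.exp (-((1 - p) / 3) ^ 2 * m / 3)) := by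
  classical
  obtain ⟨hp0, hp1⟩ := hp
  obtain ⟨hprob, hindep, hunif⟩ := hP
  haveI := hprob
  set δ : ℝ := (1 - p) / 3 with hδ
  have hδ0 : 0 < δ := by simp only [hδ]; linarith
  have hδ3 : δ < 1/3 := by simp only [hδ]; linarith
  set S : Finset V := starSet G θ X0 with hS
  -- Step A: |S| ≤ (1+δ) m
  have hScard : (S.card : ℝ) ≤ (1 + δ) * m := by
    obtain ⟨W, hXW, -, hWcard⟩ := Finset.exists_subsuperset_card_eq X0.subset_univ hX0
      (by simpa [Finset.card_univ, hn] using hmn)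
    have hsub : S ⊆ starSet G 2 W := by
      intro v hv
      simp only [hS, starSet, Finset.mem_filter, Finset.mem_univ, true_and] at hv ⊢
      exact le_trans (le_trans hθ hv)
        (Finset.card_le_card (Finset.filter_subset_filter _ hXW))
    calc (S.card : ℝ) ≤ ((starSet G 2 W).card : ℝ) := by
            exact_mod_cast Finset.card_le_card hsub
      _ ≤ (1 + δ) * m := hW W hWcard
  -- indicators
  set I : V → ((ℕ × V) → ℝ) → ℝ := fun v ω => if ω (1, v) ≤ p then 1 else 0 with hI
  have hImeas : ∀ v, Measurable (I v) := by
    intro v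
    exact Measurable.ite ((measurable_pi_apply (1, v)) measurableSet_Iic)
      measurable_const measurable_const
  -- independence
  have hIindep : iIndepFun I P := by
    have hjinj : Function.Injective (fun v : V => ((1 : ℕ), v)) := fun a b h => by
      simpa using h
    have h1 := aux_indep_reindex hindep hjinj
    have := h1.comp (fun _ (u : ℝ) => if u ≤ p then (1:ℝ) else 0)
      (fun _ => Measurable.ite measurableSet_Iic measurable_const measurable_const)
    exact this
  set X : ((ℕ × V) → ℝ) → ℝ := fun ω => ∑ v ∈ S, I v ω with hX
  -- card identity
  have hcard : ∀ ω, ((tcp G θ p X0 ω 1).card : ℝ) = X ω := by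
    intro ω
    have h1 : tcp G θ p X0 ω 1 = S.filter (fun v => ω (1, v) ≤ p) := rfl
    rw [h1, Finset.card_filter]
    push_cast
    simp [hX, hI]
  -- mgf of each indicator
  have hmgf : ∀ v : V, mgf (I v) P δ = 1 - p + p * Real.exp δ := by
    intro v
    have hfun : (fun ω : (ℕ × V) → ℝ => Real.exp (δ * I v ω))
        = (fun ω : (ℕ × V) → ℝ =>
            (fun u : ℝ => 1 + (Set.Iic p).indicator (fun _ => Real.exp δ - 1) u) (ω (1, v))) := by
      ext ω
      by_cases h : ω (1, v) ≤ p <;>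
        simp [hI, h, Set.indicator, Set.mem_Iic, Real.exp_zero, mul_one, mul_zero]
    have hgm : AEStronglyMeasurable
        (fun u : ℝ => 1 + (Set.Iic p).indicator (fun _ => Real.exp δ - 1) u)
        (volume.restrict (Set.Icc (0:ℝ) 1)) :=
      (measurable_const.add (measurable_const.indicator measurableSet_Iic)).aestronglyMeasurable
    have hgm' : AEStronglyMeasurable
        (fun u : ℝ => 1 + (Set.Iic p).indicator (fun _ => Real.exp δ - 1) u)
        (P.map (fun ω : (ℕ × V) → ℝ => ω (1, v))) := by
      rw [hunif (1, v)]; exact hgm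
    have hchg : ∫ ω, (fun u : ℝ => 1 + (Set.Iic p).indicator (fun _ => Real.exp δ - 1) u) (ω (1, v)) ∂P
        = ∫ u, (fun u : ℝ => 1 + (Set.Iic p).indicator (fun _ => Real.exp δ - 1) u) u
            ∂(volume.restrict (Set.Icc (0:ℝ) 1)) := by
      rw [← hunif (1, v)]
      exact (integral_map (φ := fun ω : (ℕ × V) → ℝ => ω (1, v))
        (measurable_pi_apply (1, v)).aemeasurable hgm').symm
    rw [mgf, hfun, hchg,
      integral_add (integrable_const _) ((integrable_const _).indicator measurableSet_Iic),
      integral_indicator measurableSet_Iic, setIntegral_const, integral_const]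
    have hinter : Set.Iic p ∩ Set.Icc (0:ℝ) 1 = Set.Icc 0 p := by
      ext x
      simp only [Set.mem_inter_iff, Set.mem_Iic, Set.mem_Icc]
      constructor
      · rintro ⟨h1, h2, h3⟩; exact ⟨h2, h1⟩
      · rintro ⟨h1, h2⟩; exact ⟨h2, h1, by linarith⟩
    rw [measureReal_def, measureReal_def]
    rw [Measure.restrict_apply_univ, Measure.restrict_apply measurableSet_Iic, hinter]
    rw [Real.volume_Icc, Real.volume_Icc]
    rw [ENNReal.toReal_ofReal (by linarith : (0:ℝ) ≤ 1 - 0),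
      ENNReal.toReal_ofReal (by linarith : (0:ℝ) ≤ p - 0)]
    simp only [smul_eq_mul]
    ring
  -- integrability
  have hXmeas : Measurable X := by
    exact Finset.measurable_sum S (fun v _ => hImeas v)
  have hint : Integrable (fun ω => Real.exp (δ * X ω)) P := by
    refine Integrable.mono' (integrable_const (Real.exp (δ * S.card)))
      ((hXmeas.const_mul δ).exp.aestronglyMeasurable) (ae_of_all _ fun ω => ?_)
    rw [Real.norm_eq_abs, abs_of_pos (Real.exp_pos _), Real.exp_le_exp]
    have hXle : X ω ≤ S.card := by
      calc X ω ≤ ∑ v ∈ S, (1:ℝ) := Finset.sum_le_sum (fun v _ => by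
            simp only [hI]; split <;> norm_num)
        _ = S.card := by simp
    exact mul_le_mul_of_nonneg_left hXle hδ0.le
  -- Chernoff
  have hcher := measure_ge_le_exp_mul_mgf (X := X) (μ := P) (t := δ)
    ((1 - δ) * m) hδ0.le hint
  have hmgfsum : mgf X P δ = (1 - p + p * Real.exp δ) ^ S.card := by
    have hXeq : X = ∑ v ∈ S, I v := by ext ω; simp [hX]
    rw [hXeq, hIindep.mgf_sum hImeas]
    simp [hmgf]
  -- real bound
  have hreal : Real.exp (-δ * ((1 - δ) * m)) * mgf X P δ ≤ Real.exp (-δ^2 * m / 3) := by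
    have hexp1 : (1:ℝ) ≤ Real.exp δ := by
      rw [← Real.exp_zero]; exact Real.exp_le_exp.2 hδ0.le
    have hq : 0 ≤ p * (Real.exp δ - 1) := mul_nonneg hp0.le (by linarith)
    have h1 : 1 - p + p * Real.exp δ ≤ Real.exp (p * (Real.exp δ - 1)) := by
      have := Real.add_one_le_exp (p * (Real.exp δ - 1)); linarith
    have hnn : (0:ℝ) ≤ 1 - p + p * Real.exp δ := by nlinarith
    have h2 : mgf X P δ ≤ Real.exp ((S.card : ℝ) * (p * (Real.exp δ - 1))) := by
      rw [hmgfsum, Real.exp_nat_mul]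
      exact pow_le_pow_left₀ hnn h1 S.card
    have h3 : (S.card : ℝ) * (p * (Real.exp δ - 1)) ≤ (1 + δ) * m * (p * (Real.exp δ - 1)) :=
      mul_le_mul_of_nonneg_right hScard hq
    have hpδ : p = 1 - 3 * δ := by rw [hδ]; ring
    have hkey := aux_key hδ0 hδ3
    calc Real.exp (-δ * ((1 - δ) * m)) * mgf X P δ
        ≤ Real.exp (-δ * ((1 - δ) * m)) * Real.exp ((1 + δ) * m * (p * (Real.exp δ - 1))) := by
          apply mul_le_mul_of_nonneg_left _ (Real.exp_pos _).le
          exact h2.trans (Real.exp_le_exp.2 h3)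
      _ = Real.exp ((1 + δ) * m * (p * (Real.exp δ - 1)) - δ * ((1 - δ) * m)) := by
          rw [← Real.exp_add]; ring_nf
      _ ≤ Real.exp (-δ^2 * m / 3) := by
          rw [Real.exp_le_exp, hpδ]
          have hm0 : (0:ℝ) ≤ m := Nat.cast_nonneg m
          nlinarith [mul_le_mul_of_nonneg_right hkey hm0]
  -- conclude
  have hev : {ω : (ℕ × V) → ℝ | (1 - δ) * m ≤ ((tcp G θ p X0 ω 1).card : ℝ)}
      = {ω | (1 - δ) * m ≤ X ω} := by
    ext ω; simp [hcard ω]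
  rw [hev]
  have hne : P {ω | (1 - δ) * m ≤ X ω} ≠ ⊤ := measure_ne_top _ _
  rw [← ENNReal.ofReal_toReal hne]
  apply ENNReal.ofReal_le_ofReal
  calc (P {ω | (1 - δ) * m ≤ X ω}).toReal ≤ Real.exp (-δ * ((1 - δ) * m)) * mgf X P δ := hcher
    _ ≤ Real.exp (-δ^2 * m / 3) := hreal
end

section
/- Logarithmic-time descent to size √n: let θ ≥ 2 be an integer, p ∈ (0,1), δ = (1−p)/3, and let n, M be positive integers with M ≤ n. Let G be a simple graph on n vertices such that for every integer m with ⌈√n⌉ ≤ m ≤ M and every W ⊆ V with |W| = m one has |W^{*2}| ≤ (1+δ)m. Set T := ⌈ (log n) / log(1/(1−δ)) ⌉. Then for every initial set X₀ with |X₀| ≤ M, the threshold-θ contact process satisfies P( ∃ t ≤ T with |X_t| ≤ √n ) ≥ 1 − T · exp( −δ² √n / 3 ). -/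
open MeasureTheory ProbabilityTheory

section Aux

variable {V : Type*} [Fintype V] (G : SimpleGraph V) (θ : ℕ) (p : ℝ) (X0 : Finset V)

lemma tcp_succ (ω : ℕ × V → ℝ) (t : ℕ) :
    tcp G θ p X0 ω (t + 1)
      = (starSet G θ (tcp G θ p X0 ω t)).filter fun v => ω (t + 1, v) ≤ p := by
  rw [tcp]

lemma tcp_congr {ω ω' : ℕ × V → ℝ} {t : ℕ}
    (h : ∀ s v, s ≤ t → ω (s, v) = ω' (s, v)) :
    tcp G θ p X0 ω t = tcp G θ p X0 ω' t := by
  induction t with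
  | zero => rfl
  | succ t ih =>
      rw [tcp_succ, tcp_succ, ih (fun s v hs => h s v (hs.trans t.le_succ))]
      exact Finset.filter_congr fun v _ => by rw [h (t+1) v le_rfl]

lemma measurableSet_filter_eq (u : ℕ) (S W : Finset V) :
    MeasurableSet {ω : (ℕ × V) → ℝ | (S.filter fun v => ω (u, v) ≤ p) = W} := by
  classical
  have hiff : ∀ ω : (ℕ × V) → ℝ,
      (S.filter fun v => ω (u, v) ≤ p) = W ↔
        (W ⊆ S ∧ ∀ v ∈ S, (ω (u, v) ≤ p ↔ v ∈ W)) := by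
    intro ω
    constructor
    · rintro rfl
      exact ⟨Finset.filter_subset _ _, fun v hv => by simp [hv]⟩
    · rintro ⟨hWS, h⟩
      ext v
      simp only [Finset.mem_filter]
      constructor
      · rintro ⟨hvS, hP⟩; exact (h v hvS).1 hP
      · intro hvW; exact ⟨hWS hvW, (h v (hWS hvW)).2 hvW⟩
  simp only [hiff]
  by_cases hWS : W ⊆ S
  · have : {ω : (ℕ × V) → ℝ | W ⊆ S ∧ ∀ v ∈ S, (ω (u, v) ≤ p ↔ v ∈ W)}
        = ⋂ v ∈ S, {ω : (ℕ × V) → ℝ | ω (u, v) ≤ p ↔ v ∈ W} := by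
      ext ω; simp [hWS]
    rw [this]
    refine MeasurableSet.biInter S.countable_toSet fun v _ => ?_
    by_cases hvW : v ∈ W
    · simp only [hvW, iff_true]
      exact measurable_pi_apply (X := fun _ : ℕ × V => ℝ) (u, v) measurableSet_Iic
    · simp only [hvW, iff_false, not_le]
      exact measurable_pi_apply (X := fun _ : ℕ × V => ℝ) (u, v) (measurableSet_Ioi (a := p))
  · have : {ω : (ℕ × V) → ℝ | W ⊆ S ∧ ∀ v ∈ S, (ω (u, v) ≤ p ↔ v ∈ W)} = ∅ := by
      ext ω; simp [hWS]
    rw [this]; exact MeasurableSet.empty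

lemma measurableSet_tcp_eq (t : ℕ) (W : Finset V) :
    MeasurableSet {ω : (ℕ × V) → ℝ | tcp G θ p X0 ω t = W} := by
  classical
  induction t generalizing W with
  | zero =>
      by_cases h : X0 = W
      · have : {ω : (ℕ × V) → ℝ | tcp G θ p X0 ω 0 = W} = Set.univ := by
          ext ω; simp [tcp, h]
        rw [this]; exact MeasurableSet.univ
      · have : {ω : (ℕ × V) → ℝ | tcp G θ p X0 ω 0 = W} = ∅ := by
          ext ω; simp [tcp, h]
        rw [this]; exact MeasurableSet.empty
  | succ t ih =>
      have : {ω : (ℕ × V) → ℝ | tcp G θ p X0 ω (t+1) = W}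
          = ⋃ W' : Finset V, ({ω : (ℕ × V) → ℝ | tcp G θ p X0 ω t = W'} ∩
              {ω : (ℕ × V) → ℝ | ((starSet G θ W').filter fun v => ω (t+1, v) ≤ p) = W}) := by
        ext ω
        simp only [Set.mem_iUnion, Set.mem_inter_iff, Set.mem_setOf_eq]
        constructor
        · intro h
          exact ⟨tcp G θ p X0 ω t, rfl, by rw [← h, tcp_succ]⟩
        · rintro ⟨W', h1, h2⟩
          rw [tcp_succ, h1, h2]
      rw [this]
      exact MeasurableSet.iUnion fun W' => (ih W').inter (measurableSet_filter_eq p _ _ _)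

end Aux

lemma iIndepFun_comp_inj {Ω ι κ : Type*} [MeasurableSpace Ω] {μ : Measure Ω}
    {f : ι → Ω → ℝ} (hf : iIndepFun f μ)
    {j : κ → ι} (hj : Function.Injective j) :
    iIndepFun (fun k => f (j k)) μ := by
  classical
  rw [iIndepFun_iff_measure_inter_preimage_eq_mul]
  intro S sets hsets
  have hj' := hf.measure_inter_preimage_eq_mul (S.image j)
    (sets := fun i => if h : ∃ k ∈ S, j k = i then sets h.choose else Set.univ) ?_
  · have hkey : ∀ k ∈ S, (if h : ∃ k' ∈ S, j k' = j k then sets h.choose else Set.univ)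
        = sets k := by
      intro k hk
      have h : ∃ k' ∈ S, j k' = j k := ⟨k, hk, rfl⟩
      rw [dif_pos h]
      have := h.choose_spec.2
      rw [hj this]
    rw [Finset.set_biInter_finset_image, Finset.prod_image
      (fun a _ b _ hab => hj hab)] at hj'
    calc μ (⋂ k ∈ S, f (j k) ⁻¹' sets k)
        = μ (⋂ k ∈ S, f (j k) ⁻¹'
            (if h : ∃ k' ∈ S, j k' = j k then sets h.choose else Set.univ)) := by
          congr 1
          exact Set.iInter₂_congr fun k hk => by rw [hkey k hk]
      _ = ∏ k ∈ S, μ (f (j k) ⁻¹'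
            (if h : ∃ k' ∈ S, j k' = j k then sets h.choose else Set.univ)) := hj'
      _ = ∏ k ∈ S, μ (f (j k) ⁻¹' sets k) :=
          Finset.prod_congr rfl fun k hk => by rw [hkey k hk]
  · intro i hi
    by_cases h : ∃ k ∈ S, j k = i
    · rw [dif_pos h]
      exact hsets _ h.choose_spec.1
    · rw [dif_neg h]
      exact MeasurableSet.univ


lemma uniform_mgf_integral {p lam : ℝ} (hp0 : 0 ≤ p) (hp1 : p ≤ 1) :
    ∫ x, Real.exp (lam * if x ≤ p then 1 else 0) ∂(volume.restrict (Set.Icc (0:ℝ) 1))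
      = 1 + p * (Real.exp lam - 1) := by
  have hfun : (fun x : ℝ => Real.exp (lam * if x ≤ p then 1 else 0))
      = fun x : ℝ => 1 + Set.indicator (Set.Iic p) (fun _ => Real.exp lam - 1) x := by
    funext x
    by_cases h : x ≤ p
    · simp [h, Set.indicator_of_mem, Set.mem_Iic]
    · simp [h, Set.indicator_of_notMem, Set.mem_Iic, Real.exp_zero]
  rw [hfun]
  have h1 : Integrable (fun _ : ℝ => (1:ℝ)) (volume.restrict (Set.Icc (0:ℝ) 1)) := by
    exact integrable_const _
  have h2 : Integrable (Set.indicator (Set.Iic p) (fun _ => Real.exp lam - 1))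
      (volume.restrict (Set.Icc (0:ℝ) 1)) :=
    (integrable_const _).indicator measurableSet_Iic
  rw [integral_add h1 h2, integral_const, integral_indicator measurableSet_Iic,
    setIntegral_const]
  have hIcc : (volume.restrict (Set.Icc (0:ℝ) 1)) Set.univ = 1 := by
    rw [Measure.restrict_apply_univ, Real.volume_Icc]; norm_num
  have hIic : (volume.restrict (Set.Icc (0:ℝ) 1)) (Set.Iic p) = ENNReal.ofReal p := by
    rw [Measure.restrict_apply measurableSet_Iic]
    have : Set.Iic p ∩ Set.Icc (0:ℝ) 1 = Set.Icc 0 p := by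
      ext x
      simp only [Set.mem_inter_iff, Set.mem_Iic, Set.mem_Icc]
      constructor
      · rintro ⟨h1, h2, h3⟩; exact ⟨h2, h1⟩
      · rintro ⟨h1, h2⟩; exact ⟨h2, h1, h2.trans hp1⟩
    rw [this, Real.volume_Icc, sub_zero]
  rw [measureReal_def, measureReal_def, hIcc, hIic, ENNReal.toReal_one, ENNReal.toReal_ofReal hp0]
  simp only [smul_eq_mul, one_smul]
  ring

lemma chernoff_raw {V : Type*} [Fintype V] (P : Measure ((ℕ × V) → ℝ))
    (hP : IsIIDUniform P) {p : ℝ} (hp0 : 0 ≤ p) (hp1 : p ≤ 1) (u : ℕ) (S' : Finset V)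
    {lam : ℝ} (hlam : 0 ≤ lam) (k : ℝ) :
    (P {ω | k ≤ ((S'.filter fun v => ω (u, v) ≤ p).card : ℝ)}).toReal
      ≤ Real.exp (-lam * k) * (1 + p * (Real.exp lam - 1)) ^ S'.card := by
  classical
  haveI : IsProbabilityMeasure P := hP.1
  set Y : V → ((ℕ × V) → ℝ) → ℝ := fun v ω => if ω (u, v) ≤ p then 1 else 0 with hY
  have hg : Measurable (fun x : ℝ => if x ≤ p then (1:ℝ) else 0) :=
    Measurable.ite measurableSet_Iic measurable_const measurable_const
  have hYmeas : ∀ v, Measurable (Y v) := fun v =>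
    hg.comp (measurable_pi_apply (u, v))
  have hYindep : iIndepFun Y P := by
    have hinj : Function.Injective (fun v : V => ((u, v) : ℕ × V)) := by
      intro a b hab; simpa using hab
    have h1 : iIndepFun
        (fun v : V => fun ω : (ℕ × V) → ℝ => ω (u, v)) P :=
      iIndepFun_comp_inj hP.2.1 hinj
    exact h1.comp (fun _ => fun x => if x ≤ p then 1 else 0) (fun _ => hg)
  have hsum : ∀ ω : (ℕ × V) → ℝ,
      ((S'.filter fun v => ω (u, v) ≤ p).card : ℝ) = (∑ v ∈ S', Y v) ω := by
    intro ω
    rw [Finset.card_filter, Finset.sum_apply]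
    push_cast
    exact Finset.sum_congr rfl fun v _ => by simp [hY]
  have hmgf : ∀ v, mgf (Y v) P lam = 1 + p * (Real.exp lam - 1) := by
    intro v
    have hcoord : AEMeasurable (fun ω : (ℕ × V) → ℝ => ω (u, v)) P :=
      (measurable_pi_apply _).aemeasurable
    have hF : AEStronglyMeasurable (fun x : ℝ => Real.exp (lam * if x ≤ p then 1 else 0))
        (Measure.map (fun ω : (ℕ × V) → ℝ => ω (u, v)) P) :=
      ((hg.const_mul lam).exp).aestronglyMeasurable
    have : mgf (Y v) P lam
        = ∫ x, Real.exp (lam * if x ≤ p then 1 else 0)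
            ∂(Measure.map (fun ω : (ℕ × V) → ℝ => ω (u, v)) P) := by
      rw [mgf, integral_map hcoord hF]
    rw [this, hP.2.2 (u, v), uniform_mgf_integral hp0 hp1]
  have hmgfsum : mgf (∑ v ∈ S', Y v) P lam = (1 + p * (Real.exp lam - 1)) ^ S'.card := by
    rw [hYindep.mgf_sum hYmeas S']
    rw [Finset.prod_congr rfl fun v _ => hmgf v, Finset.prod_const]
  have hint : Integrable (fun ω => Real.exp (lam * (∑ v ∈ S', Y v) ω)) P := by
    refine Integrable.mono' (integrable_const (Real.exp (lam * S'.card))) ?_ ?_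
    · have : Measurable (∑ v ∈ S', Y v) := by
        rw [Finset.sum_fn]
        exact Finset.measurable_sum S' fun v _ => hYmeas v
      exact ((this.const_mul lam).exp).aestronglyMeasurable
    · refine Filter.Eventually.of_forall fun ω => ?_
      rw [Real.norm_eq_abs, abs_of_pos (Real.exp_pos _), Real.exp_le_exp]
      have : (∑ v ∈ S', Y v) ω ≤ S'.card := by
        rw [Finset.sum_apply]
        calc ∑ v ∈ S', Y v ω ≤ ∑ v ∈ S', 1 := by
              refine Finset.sum_le_sum fun v _ => ?_
              by_cases h : ω (u, v) ≤ p <;> simp [hY, h]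
          _ = S'.card := by simp
      exact mul_le_mul_of_nonneg_left this hlam
  have hch := measure_ge_le_exp_mul_mgf (X := ∑ v ∈ S', Y v) (μ := P) k hlam hint
  rw [hmgfsum] at hch
  have hset : {ω : (ℕ × V) → ℝ | k ≤ ((S'.filter fun v => ω (u, v) ≤ p).card : ℝ)}
      = {ω | k ≤ (∑ v ∈ S', Y v) ω} := by
    ext ω; rw [Set.mem_setOf_eq, Set.mem_setOf_eq, hsum ω]
  rw [hset]
  exact hch

lemma numeric_exponent {δ : ℝ} (h0 : 0 < δ) (h3 : 3 * δ < 1) :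
    -δ * (1 - δ) + (1 + δ) * (1 - 3 * δ) * (Real.exp δ - 1) ≤ -δ ^ 2 / 3 := by
  have hδ1 : δ ≤ 1 := by linarith
  have hexp : Real.exp δ ≤ 1 + δ + δ ^ 2 / 2 + 2 / 9 * δ ^ 3 := by
    have h := Real.exp_bound' h0.le hδ1 (n := 3) (by norm_num)
    have hsum : (∑ m ∈ Finset.range 3, δ ^ m / m.factorial) = 1 + δ + δ ^ 2 / 2 := by
      norm_num [Finset.sum_range_succ, Nat.factorial]
    rw [hsum] at h
    refine h.trans (le_of_eq ?_)
    norm_num [Nat.factorial]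
    ring
  have hco : (0:ℝ) ≤ (1 + δ) * (1 - 3 * δ) := by nlinarith
  have key : (1 + δ) * (1 - 3 * δ) * (Real.exp δ - 1)
      ≤ (1 + δ) * (1 - 3 * δ) * (δ + δ ^ 2 / 2 + 2 / 9 * δ ^ 3) := by
    apply mul_le_mul_of_nonneg_left _ hco
    linarith
  nlinarith [key, sq_nonneg δ, pow_pos h0 3, pow_pos h0 4, pow_pos h0 5]

lemma chernoff_event_bound {V : Type*} [Fintype V] (P : Measure ((ℕ × V) → ℝ))
    (hP : IsIIDUniform P) {p : ℝ} (hp : p ∈ Set.Ioo (0:ℝ) 1) (u : ℕ) (S' : Finset V)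
    {m : ℝ} (hm1 : 1 ≤ m) (hS' : (S'.card : ℝ) ≤ (1 + (1 - p) / 3) * m) :
    P {ω | (1 - (1 - p) / 3) * m < ((S'.filter fun v => ω (u, v) ≤ p).card : ℝ)}
      ≤ ENNReal.ofReal (Real.exp (-((1 - p) / 3) ^ 2 * m / 3)) := by
  classical
  haveI : IsProbabilityMeasure P := hP.1
  set δ : ℝ := (1 - p) / 3 with hδdef
  have hδ0 : 0 < δ := by simp only [hδdef]; linarith [hp.2]
  have hδ3 : 3 * δ < 1 := by simp only [hδdef]; linarith [hp.1]
  have hsub : {ω : (ℕ × V) → ℝ | (1 - δ) * m < ((S'.filter fun v => ω (u, v) ≤ p).card : ℝ)}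
      ⊆ {ω : (ℕ × V) → ℝ | (1 - δ) * m ≤ ((S'.filter fun v => ω (u, v) ≤ p).card : ℝ)} :=
    fun ω hω => by
      simp only [Set.mem_setOf_eq] at hω ⊢
      exact hω.le
  refine le_trans (measure_mono hsub) ?_
  have hraw := chernoff_raw P hP hp.1.le hp.2.le u S' hδ0.le ((1 - δ) * m)
  have hq0 : (0:ℝ) < 1 + p * (Real.exp δ - 1) := by
    have : (0:ℝ) ≤ p * (Real.exp δ - 1) := by
      apply mul_nonneg hp.1.le
      linarith [Real.one_le_exp hδ0.le]
    linarith
  have hqe : 1 + p * (Real.exp δ - 1) ≤ Real.exp (p * (Real.exp δ - 1)) := by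
    linarith [Real.add_one_le_exp (p * (Real.exp δ - 1))]
  have hpow : (1 + p * (Real.exp δ - 1)) ^ S'.card
      ≤ Real.exp ((1 + δ) * m * (p * (Real.exp δ - 1))) := by
    calc (1 + p * (Real.exp δ - 1)) ^ S'.card
        ≤ Real.exp (p * (Real.exp δ - 1)) ^ S'.card :=
          pow_le_pow_left₀ hq0.le hqe _
      _ = Real.exp (S'.card * (p * (Real.exp δ - 1))) := by
          rw [← Real.exp_nat_mul]
      _ ≤ Real.exp ((1 + δ) * m * (p * (Real.exp δ - 1))) := by
          rw [Real.exp_le_exp]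
          apply mul_le_mul_of_nonneg_right hS'
          apply mul_nonneg hp.1.le
          linarith [Real.one_le_exp hδ0.le]
  have hfinal : Real.exp (-δ * ((1 - δ) * m)) * (1 + p * (Real.exp δ - 1)) ^ S'.card
      ≤ Real.exp (-δ ^ 2 * m / 3) := by
    calc Real.exp (-δ * ((1 - δ) * m)) * (1 + p * (Real.exp δ - 1)) ^ S'.card
        ≤ Real.exp (-δ * ((1 - δ) * m)) * Real.exp ((1 + δ) * m * (p * (Real.exp δ - 1))) :=
          mul_le_mul_of_nonneg_left hpow (Real.exp_pos _).le
      _ = Real.exp (m * (-δ * (1 - δ) + (1 + δ) * p * (Real.exp δ - 1))) := by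
          rw [← Real.exp_add]; ring_nf
      _ ≤ Real.exp (-δ ^ 2 * m / 3) := by
          rw [Real.exp_le_exp]
          have hp3 : p = 1 - 3 * δ := by simp only [hδdef]; ring
          have hnum := numeric_exponent hδ0 hδ3
          rw [hp3]
          calc m * (-δ * (1 - δ) + (1 + δ) * (1 - 3 * δ) * (Real.exp δ - 1))
              ≤ m * (-δ ^ 2 / 3) := by
                apply mul_le_mul_of_nonneg_left hnum (by linarith)
            _ = -δ ^ 2 * m / 3 := by ring
  rw [← ENNReal.ofReal_toReal
    (measure_ne_top P {ω | (1 - δ) * m ≤ ((S'.filter fun v => ω (u, v) ≤ p).card : ℝ)})]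
  exact ENNReal.ofReal_le_ofReal (le_trans hraw hfinal)

lemma measurableSet_card_gt {V : Type*} [Fintype V] (p : ℝ) (u : ℕ) (S' : Finset V)
    (thr : ℝ) :
    MeasurableSet {ω : (ℕ × V) → ℝ | thr < ((S'.filter fun v => ω (u, v) ≤ p).card : ℝ)} := by
  classical
  have : {ω : (ℕ × V) → ℝ | thr < ((S'.filter fun v => ω (u, v) ≤ p).card : ℝ)}
      = ⋃ (W : Finset V) (_ : thr < (W.card : ℝ)),
          {ω : (ℕ × V) → ℝ | (S'.filter fun v => ω (u, v) ≤ p) = W} := by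
    ext ω
    simp only [Set.mem_setOf_eq, Set.mem_iUnion]
    constructor
    · intro h
      exact ⟨_, h, rfl⟩
    · rintro ⟨W, hW, h⟩
      rw [h]; exact hW
  rw [this]
  exact MeasurableSet.iUnion fun W => MeasurableSet.iUnion fun _ =>
    measurableSet_filter_eq p u S' W

lemma indep_split {V : Type*} [Fintype V] (G : SimpleGraph V) (θ : ℕ) (p : ℝ)
    (X0 : Finset V) (P : Measure ((ℕ × V) → ℝ)) (hP : IsIIDUniform P)
    (t : ℕ) (W : Finset V) (thr : ℝ) :
    P ({ω | tcp G θ p X0 ω t = W} ∩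
        {ω | thr < (((starSet G θ W).filter fun v => ω (t + 1, v) ≤ p).card : ℝ)})
      = P {ω | tcp G θ p X0 ω t = W} *
        P {ω | thr < (((starSet G θ W).filter fun v => ω (t + 1, v) ≤ p).card : ℝ)} := by
  classical
  set S₁ : Finset (ℕ × V) := (Finset.range (t + 1)) ×ˢ Finset.univ with hS₁
  set S₂ : Finset (ℕ × V) := {t + 1} ×ˢ Finset.univ with hS₂
  have hdisj : Disjoint S₁ S₂ := by
    rw [Finset.disjoint_left]
    rintro ⟨s, v⟩ h1 h2
    simp only [hS₁, hS₂, Finset.mem_product, Finset.mem_range, Finset.mem_singleton] at h1 h2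
    omega
  have hIndep : IndepFun (fun ω (i : S₁) => ω i.1) (fun ω (i : S₂) => ω i.1) P :=
    hP.2.1.indepFun_finset S₁ S₂ hdisj (fun i => measurable_pi_apply i)
  -- extension maps
  set ext₁ : (S₁ → ℝ) → ((ℕ × V) → ℝ) :=
    fun g i => if h : i ∈ S₁ then g ⟨i, h⟩ else 0 with hext₁
  set ext₂ : (S₂ → ℝ) → ((ℕ × V) → ℝ) :=
    fun g i => if h : i ∈ S₂ then g ⟨i, h⟩ else 0 with hext₂
  have hext₁meas : Measurable ext₁ := by
    apply measurable_pi_lambda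
    intro i
    by_cases h : i ∈ S₁
    · simp only [hext₁, dif_pos h]
      exact measurable_pi_apply _
    · simp only [hext₁, dif_neg h]
      exact measurable_const
  have hext₂meas : Measurable ext₂ := by
    apply measurable_pi_lambda
    intro i
    by_cases h : i ∈ S₂
    · simp only [hext₂, dif_pos h]
      exact measurable_pi_apply _
    · simp only [hext₂, dif_neg h]
      exact measurable_const
  set A : Set (S₁ → ℝ) := ext₁ ⁻¹' {ω | tcp G θ p X0 ω t = W} with hA
  set B : Set (S₂ → ℝ) :=
    ext₂ ⁻¹' {ω | thr < (((starSet G θ W).filter fun v => ω (t + 1, v) ≤ p).card : ℝ)} with hB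
  have hAmeas : MeasurableSet A := hext₁meas (measurableSet_tcp_eq G θ p X0 t W)
  have hBmeas : MeasurableSet B := hext₂meas (measurableSet_card_gt p (t + 1) _ thr)
  have hApre : (fun (ω : (ℕ × V) → ℝ) (i : S₁) => ω i.1) ⁻¹' A = {ω | tcp G θ p X0 ω t = W} := by
    ext ω
    simp only [Set.mem_preimage, hA, Set.mem_setOf_eq]
    have : tcp G θ p X0 (ext₁ fun i : S₁ => ω i.1) t = tcp G θ p X0 ω t := by
      apply tcp_congr
      intro s v hs
      have hmem : ((s, v) : ℕ × V) ∈ S₁ := by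
        simp only [hS₁, Finset.mem_product, Finset.mem_range, Finset.mem_univ, and_true]
        omega
      simp only [hext₁, dif_pos hmem]
    rw [this]
  have hBpre : (fun (ω : (ℕ × V) → ℝ) (i : S₂) => ω i.1) ⁻¹' B
      = {ω | thr < (((starSet G θ W).filter fun v => ω (t + 1, v) ≤ p).card : ℝ)} := by
    ext ω
    simp only [Set.mem_preimage, hB, Set.mem_setOf_eq]
    have : ((starSet G θ W).filter fun v =>
        (ext₂ fun i : S₂ => ω i.1) (t + 1, v) ≤ p)
        = (starSet G θ W).filter fun v => ω (t + 1, v) ≤ p := by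
      apply Finset.filter_congr
      intro v _
      have hmem : ((t + 1, v) : ℕ × V) ∈ S₂ := by
        simp [hS₂]
      simp only [hext₂, dif_pos hmem]
    rw [this]
  rw [← hApre, ← hBpre]
  exact hIndep.measure_inter_preimage_eq_mul A B hAmeas hBmeas

/-- Logarithmic-time descent to size `√n`: with `δ = (1-p)/3` and
`T = ⌈log n / log(1/(1-δ))⌉`, on a graph where all sets of sizes between `⌈√n⌉` and `M` have
`2`-expansion at most `(1+δ)`, the threshold-`θ` contact process started from at most `M`
infected vertices reaches size at most `√n` by time `T` with probability at least
`1 - T·exp(-δ²√n/3)`. -/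
theorem tcp_descent_to_sqrt {V : Type*} [Fintype V] (G : SimpleGraph V)
    (θ : ℕ) (hθ : 2 ≤ θ) (p : ℝ) (hp : p ∈ Set.Ioo (0 : ℝ) 1)
    (n M : ℕ) (hn : Fintype.card V = n) (hn0 : 0 < n) (hM0 : 0 < M) (hMn : M ≤ n)
    (hW : ∀ m : ℕ, ⌈Real.sqrt n⌉₊ ≤ m → m ≤ M → ∀ W : Finset V, W.card = m →
      ((starSet G 2 W).card : ℝ) ≤ (1 + (1 - p) / 3) * m)
    (X0 : Finset V) (hX0 : X0.card ≤ M)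
    (P : Measure ((ℕ × V) → ℝ)) (hP : IsIIDUniform P) :
    ENNReal.ofReal (1 - (⌈Real.log n / Real.log (1 / (1 - (1 - p) / 3))⌉₊ : ℝ) *
        Real.exp (-((1 - p) / 3) ^ 2 * Real.sqrt n / 3)) ≤
      P {ω | ∃ t ≤ ⌈Real.log n / Real.log (1 / (1 - (1 - p) / 3))⌉₊,
          ((tcp G θ p X0 ω t).card : ℝ) ≤ Real.sqrt n} := by
  classical
  haveI : IsProbabilityMeasure P := hP.1
  obtain ⟨hp0, hp1⟩ := hp
  set δ : ℝ := (1 - p) / 3 with hδdef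
  have hδ0 : 0 < δ := by rw [hδdef]; linarith
  have hδ3 : 3 * δ < 1 := by rw [hδdef]; linarith
  set T : ℕ := ⌈Real.log n / Real.log (1 / (1 - δ))⌉₊ with hT
  set s : ℝ := Real.sqrt n with hs
  have hs1 : 1 ≤ s := by
    rw [hs]
    rw [show (1:ℝ) = Real.sqrt 1 by rw [Real.sqrt_one]]
    exact Real.sqrt_le_sqrt (by exact_mod_cast hn0)
  have hsn : s ≤ (n : ℝ) := by
    have h2 : s * s = (n : ℝ) := Real.mul_self_sqrt (Nat.cast_nonneg n)
    nlinarith [hs1]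
  set E : Set ((ℕ × V) → ℝ) :=
    {ω | ∃ t ≤ T, ((tcp G θ p X0 ω t).card : ℝ) ≤ s} with hE
  have hEmeas : MeasurableSet E := by
    have hEeq : E = ⋃ (t : ℕ) (_ : t ≤ T) (W : Finset V) (_ : (W.card : ℝ) ≤ s),
        {ω : (ℕ × V) → ℝ | tcp G θ p X0 ω t = W} := by
      ext ω
      simp only [hE, Set.mem_setOf_eq, Set.mem_iUnion]
      constructor
      · rintro ⟨t, ht, hcard⟩
        exact ⟨t, ht, tcp G θ p X0 ω t, hcard, rfl⟩
      · rintro ⟨t, ht, W, hcard, htcp⟩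
        exact ⟨t, ht, by rw [htcp]; exact hcard⟩
    rw [hEeq]
    exact MeasurableSet.iUnion fun t => MeasurableSet.iUnion fun _ =>
      MeasurableSet.iUnion fun W => MeasurableSet.iUnion fun _ =>
        measurableSet_tcp_eq G θ p X0 t W
  set C : ℕ → Finset V → Set ((ℕ × V) → ℝ) := fun t W =>
    {ω | (1 - δ) * W.card < (((starSet G θ W).filter fun v => ω (t + 1, v) ≤ p).card : ℝ)}
    with hC
  set 𝒲 : Finset (Finset V) :=
    Finset.univ.filter (fun W : Finset V => s < (W.card : ℝ) ∧ W.card ≤ M) with h𝒲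
  set Bad : ℕ → Set ((ℕ × V) → ℝ) := fun t =>
    ⋃ W ∈ 𝒲, ({ω : (ℕ × V) → ℝ | tcp G θ p X0 ω t = W} ∩ C t W) with hBad
  have h1δ0 : 0 < 1 - δ := by linarith
  have h1δ1 : 1 - δ < 1 := by linarith
  -- (1-δ)^T * n ≤ 1
  have hTpow : (1 - δ) ^ T * n ≤ 1 := by
    have hlogL : Real.log (1 / (1 - δ)) = -Real.log (1 - δ) := by
      rw [one_div, Real.log_inv]
    have hlogneg : Real.log (1 - δ) < 0 := Real.log_neg h1δ0 h1δ1
    have hlogpos : 0 < Real.log (1 / (1 - δ)) := by rw [hlogL]; linarith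
    have hceil : Real.log n / Real.log (1 / (1 - δ)) ≤ T := Nat.le_ceil _
    have hTlog : Real.log n ≤ T * Real.log (1 / (1 - δ)) := by
      rw [div_le_iff₀ hlogpos] at hceil
      linarith
    have hexp : (1 - δ) ^ T = Real.exp (T * Real.log (1 - δ)) := by
      rw [← Real.exp_log h1δ0, ← Real.exp_nat_mul, Real.log_exp]
    have hbound : (1 - δ) ^ T ≤ Real.exp (-Real.log n) := by
      rw [hexp, Real.exp_le_exp]
      rw [hlogL] at hTlog
      linarith
    have hn1 : (0:ℝ) < n := by exact_mod_cast hn0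
    have : Real.exp (-Real.log n) = 1 / n := by
      rw [Real.exp_neg, Real.exp_log hn1, one_div]
    rw [this] at hbound
    calc (1 - δ) ^ T * n ≤ (1 / n) * n :=
        mul_le_mul_of_nonneg_right hbound hn1.le
      _ = 1 := by field_simp
  -- deterministic claim
  have hsubset : Eᶜ ⊆ ⋃ t ∈ Finset.range T, Bad t := by
    intro ω hω
    simp only [hE, Set.mem_compl_iff, Set.mem_setOf_eq, not_exists, not_le, not_and] at hω
    by_contra hnot
    simp only [Set.mem_iUnion, not_exists] at hnot
    have hkey : ∀ t, t ≤ T → ((tcp G θ p X0 ω t).card : ℝ) ≤ (1 - δ) ^ t * M := by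
      intro t
      induction t with
      | zero =>
          intro _
          simp only [pow_zero, one_mul, tcp]
          exact_mod_cast hX0
      | succ t ih =>
          intro ht
          have ht' : t ≤ T := Nat.le_of_succ_le ht
          have htT : t < T := Nat.lt_of_succ_le ht
          have hle := ih ht'
          have hWcard_lt : s < ((tcp G θ p X0 ω t).card : ℝ) := hω t ht'
          have hpowle : (1 - δ) ^ t ≤ 1 := pow_le_one₀ h1δ0.le (by linarith)
          have hWleM : ((tcp G θ p X0 ω t).card : ℝ) ≤ M := by
            calc ((tcp G θ p X0 ω t).card : ℝ) ≤ (1 - δ) ^ t * M := hle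
              _ ≤ 1 * M := mul_le_mul_of_nonneg_right hpowle (Nat.cast_nonneg M)
              _ = M := one_mul _
          have hWleM' : (tcp G θ p X0 ω t).card ≤ M := by exact_mod_cast hWleM
          have hmem𝒲 : tcp G θ p X0 ω t ∈ 𝒲 := by
            simp only [h𝒲, Finset.mem_filter, Finset.mem_univ, true_and]
            exact ⟨hWcard_lt, hWleM'⟩
          have hnotC : ω ∉ C t (tcp G θ p X0 ω t) := by
            intro hCmem
            exact hnot t (Finset.mem_range.mpr htT)
              (Set.mem_iUnion₂.mpr ⟨tcp G θ p X0 ω t, hmem𝒲, ⟨rfl, hCmem⟩⟩)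
          have hstep : ((tcp G θ p X0 ω (t + 1)).card : ℝ)
              ≤ (1 - δ) * ((tcp G θ p X0 ω t).card : ℝ) := by
            rw [tcp_succ]
            have := hnotC
            simp only [hC, Set.mem_setOf_eq, not_lt] at this
            exact this
          calc ((tcp G θ p X0 ω (t + 1)).card : ℝ)
              ≤ (1 - δ) * ((tcp G θ p X0 ω t).card : ℝ) := hstep
            _ ≤ (1 - δ) * ((1 - δ) ^ t * M) :=
                mul_le_mul_of_nonneg_left hle h1δ0.le
            _ = (1 - δ) ^ (t + 1) * M := by ring
    have hfin := hkey T le_rfl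
    have hlast : s < ((tcp G θ p X0 ω T).card : ℝ) := hω T le_rfl
    have hMnR : (M : ℝ) ≤ n := by exact_mod_cast hMn
    have hpownn : (0:ℝ) ≤ (1 - δ) ^ T := pow_nonneg h1δ0.le _
    have : ((tcp G θ p X0 ω T).card : ℝ) ≤ 1 := by
      calc ((tcp G θ p X0 ω T).card : ℝ) ≤ (1 - δ) ^ T * M := hfin
        _ ≤ (1 - δ) ^ T * n := mul_le_mul_of_nonneg_left hMnR hpownn
        _ ≤ 1 := hTpow
    linarith
  -- probability of bad events
  have hBadmeas : ∀ t, MeasurableSet (Bad t) := by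
    intro t
    exact MeasurableSet.biUnion 𝒲.countable_toSet fun W _ =>
      (measurableSet_tcp_eq G θ p X0 t W).inter (measurableSet_card_gt p (t + 1) _ _)
  have hBadbound : ∀ t : ℕ, P (Bad t) ≤ ENNReal.ofReal (Real.exp (-δ ^ 2 * s / 3)) := by
    intro t
    have hCbound : ∀ W ∈ 𝒲, P (C t W) ≤ ENNReal.ofReal (Real.exp (-δ ^ 2 * s / 3)) := by
      intro W hWmem
      simp only [h𝒲, Finset.mem_filter, Finset.mem_univ, true_and] at hWmem
      obtain ⟨hWs, hWM⟩ := hWmem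
      have hm1 : 1 ≤ (W.card : ℝ) := le_of_lt (lt_of_le_of_lt hs1 hWs)
      have hceil : ⌈s⌉₊ ≤ W.card := Nat.ceil_le.mpr hWs.le
      have hsub : starSet G θ W ⊆ starSet G 2 W := by
        intro v hv
        simp only [starSet, Finset.mem_filter, Finset.mem_univ, true_and] at hv ⊢
        exact le_trans hθ hv
      have hS' : ((starSet G θ W).card : ℝ) ≤ (1 + δ) * W.card := by
        calc ((starSet G θ W).card : ℝ) ≤ ((starSet G 2 W).card : ℝ) := by
              exact_mod_cast Finset.card_le_card hsub
          _ ≤ (1 + δ) * W.card := hW W.card hceil hWM W rfl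
      have hcb := chernoff_event_bound P hP ⟨hp0, hp1⟩ (t + 1) (starSet G θ W)
        hm1 hS'
      rw [← hδdef] at hcb
      refine le_trans hcb ?_
      apply ENNReal.ofReal_le_ofReal
      rw [Real.exp_le_exp]
      have hsW : s ≤ (W.card : ℝ) := hWs.le
      have := mul_le_mul_of_nonneg_left hsW (sq_nonneg δ)
      linarith
    have hdisjoint : (↑𝒲 : Set (Finset V)).PairwiseDisjoint
        (fun W => {ω : (ℕ × V) → ℝ | tcp G θ p X0 ω t = W}) := by
      intro W1 h1 W2 h2 hne
      rw [Function.onFun, Set.disjoint_left]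
      rintro ω hω1 hω2
      simp only [Set.mem_setOf_eq] at hω1 hω2
      exact hne (hω1.symm.trans hω2)
    calc P (Bad t)
        ≤ ∑ W ∈ 𝒲, P ({ω : (ℕ × V) → ℝ | tcp G θ p X0 ω t = W} ∩ C t W) :=
          measure_biUnion_finset_le 𝒲 _
      _ = ∑ W ∈ 𝒲, P {ω : (ℕ × V) → ℝ | tcp G θ p X0 ω t = W} * P (C t W) :=
          Finset.sum_congr rfl fun W _ => indep_split G θ p X0 P hP t W _
      _ ≤ ∑ W ∈ 𝒲, P {ω : (ℕ × V) → ℝ | tcp G θ p X0 ω t = W} *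
            ENNReal.ofReal (Real.exp (-δ ^ 2 * s / 3)) :=
          Finset.sum_le_sum fun W hWmem => mul_le_mul_right (hCbound W hWmem) _
      _ = (∑ W ∈ 𝒲, P {ω : (ℕ × V) → ℝ | tcp G θ p X0 ω t = W}) *
            ENNReal.ofReal (Real.exp (-δ ^ 2 * s / 3)) := by
          rw [Finset.sum_mul]
      _ ≤ 1 * ENNReal.ofReal (Real.exp (-δ ^ 2 * s / 3)) := by
          apply mul_le_mul_left
          rw [← measure_biUnion_finset hdisjoint
            (fun W _ => measurableSet_tcp_eq G θ p X0 t W)]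
          exact prob_le_one
      _ = ENNReal.ofReal (Real.exp (-δ ^ 2 * s / 3)) := one_mul _
  have hcompl : P Eᶜ ≤ ENNReal.ofReal (T * Real.exp (-δ ^ 2 * s / 3)) := by
    calc P Eᶜ ≤ P (⋃ t ∈ Finset.range T, Bad t) := measure_mono hsubset
      _ ≤ ∑ t ∈ Finset.range T, P (Bad t) := measure_biUnion_finset_le _ _
      _ ≤ ∑ t ∈ Finset.range T, ENNReal.ofReal (Real.exp (-δ ^ 2 * s / 3)) :=
          Finset.sum_le_sum fun t _ => hBadbound t
      _ = (T : ℕ) • ENNReal.ofReal (Real.exp (-δ ^ 2 * s / 3)) := by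
          rw [Finset.sum_const, Finset.card_range]
      _ = ENNReal.ofReal (T * Real.exp (-δ ^ 2 * s / 3)) := by
          rw [nsmul_eq_mul, ← ENNReal.ofReal_natCast T,
            ← ENNReal.ofReal_mul (Nat.cast_nonneg T)]
  set a : ℝ := T * Real.exp (-δ ^ 2 * s / 3) with ha
  have ha0 : 0 ≤ a := mul_nonneg (Nat.cast_nonneg T) (Real.exp_pos _).le
  by_cases hcase : 1 - a ≤ 0
  · rw [ENNReal.ofReal_eq_zero.mpr hcase]
    exact zero_le
  · have hPE : P E = 1 - P Eᶜ := by
      rw [prob_compl_eq_one_sub hEmeas, ENNReal.sub_sub_cancel ENNReal.one_ne_top prob_le_one]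
    rw [hPE]
    have hofr : ENNReal.ofReal (1 - a) = 1 - ENNReal.ofReal a := by
      rw [ENNReal.ofReal_sub 1 ha0, ENNReal.ofReal_one]
    rw [hofr]
    exact tsub_le_tsub_left hcompl 1
end
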